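/- Let G = ⟨V, Σ, P, S⟩ be a context-free grammar with axiom S, let φ : Σ* → O_n be a monoid morphism into the group of real orthogonal n×n matrices, let w ∈ Σ* be a fixed word, and let L = {u w v : (u,v) ∈ C_S}. Then Cl(φ(L)) = {X φ(w) Yᵀ : X ⊕ Y ∈ Cl(M_S)}. -/

import Mathlib

open Matrix

/-- The monoid of cycles of a variable `A` of a context-free grammar `g`, relative to a
monoid morphism `φ` into the orthogonal matrices:
`M_A = {φ(u) ⊕ φ(v)ᵀ : (u,v) ∈ C_A}`, where `C_A = {(u,v) : A ⇒* u A v}`. -/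
def cycleMonoid {T : Type*} {n : ℕ} (g : ContextFreeGrammar T) (A : g.NT)
    (φ : FreeMonoid T →* Matrix (Fin n) (Fin n) ℝ) :
    Set (Matrix (Fin n ⊕ Fin n) (Fin n ⊕ Fin n) ℝ) :=
  {Z | ∃ u v : List T,
    g.Derives [Symbol.nonterminal A]
      (u.map Symbol.terminal ++ [Symbol.nonterminal A] ++ v.map Symbol.terminal) ∧
    Z = Matrix.fromBlocks (φ (FreeMonoid.ofList u)) 0 0 ((φ (FreeMonoid.ofList v))ᵀ)}

/-- Entries of an orthogonal matrix lie in `[-1, 1]`. -/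
lemma entry_mem_Icc_of_star_mul_self {m : Type*} [Fintype m] [DecidableEq m]
    (A : Matrix m m ℝ) (hA : star A * A = 1) (i j : m) :
    A i j ∈ Set.Icc (-1 : ℝ) 1 := by
  have h : (star A * A) j j = (1 : Matrix m m ℝ) j j := by rw [hA]
  rw [Matrix.mul_apply, Matrix.one_apply_eq] at h
  have hle : A i j * A i j ≤ ∑ k, star A j k * A k j := by
    have := Finset.single_le_sum (f := fun k => star A j k * A k j)
      (fun k _ => by simpa [Matrix.star_apply] using mul_self_nonneg (A k j))
      (Finset.mem_univ i)
    simpa [Matrix.star_apply] using this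
  rw [h] at hle
  constructor <;> nlinarith

theorem closure_image_sandwich_eq {T : Type*} {n : ℕ}
    (g : ContextFreeGrammar T)
    (φ : FreeMonoid T →* Matrix (Fin n) (Fin n) ℝ)
    (hφ : ∀ x : FreeMonoid T,
      φ x ∈ (Matrix.orthogonalGroup (Fin n) ℝ : Set (Matrix (Fin n) (Fin n) ℝ)))
    (w : List T) :
    closure ((fun x : List T => φ (FreeMonoid.ofList x)) ''
        {x : List T | ∃ u v : List T,
          g.Derives [Symbol.nonterminal g.initial]
            (u.map Symbol.terminal ++ [Symbol.nonterminal g.initial] ++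
              v.map Symbol.terminal) ∧
          x = u ++ w ++ v}) =
      {Z : Matrix (Fin n) (Fin n) ℝ | ∃ X Y : Matrix (Fin n) (Fin n) ℝ,
        Matrix.fromBlocks X 0 0 Y ∈ closure (cycleMonoid g g.initial φ) ∧
        Z = X * φ (FreeMonoid.ofList w) * Yᵀ} := by
  classical
  set M := cycleMonoid g g.initial φ with hM
  set F : Matrix (Fin n ⊕ Fin n) (Fin n ⊕ Fin n) ℝ → Matrix (Fin n) (Fin n) ℝ :=
    fun Z => Z.toBlocks₁₁ * φ (FreeMonoid.ofList w) * (Z.toBlocks₂₂)ᵀ with hF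
  -- continuity of F
  have hc11 : Continuous fun Z : Matrix (Fin n ⊕ Fin n) (Fin n ⊕ Fin n) ℝ => Z.toBlocks₁₁ :=
    continuous_id.matrix_submatrix Sum.inl Sum.inl
  have hc22 : Continuous fun Z : Matrix (Fin n ⊕ Fin n) (Fin n ⊕ Fin n) ℝ => Z.toBlocks₂₂ :=
    continuous_id.matrix_submatrix Sum.inr Sum.inr
  have hFcont : Continuous F :=
    ((hc11.matrix_mul continuous_const).matrix_mul hc22.matrix_transpose)
  -- elements of M are orthogonal
  have hMorth : ∀ Z ∈ M, star Z * Z = 1 := by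
    rintro Z ⟨u, v, _, rfl⟩
    have hu := (Unitary.mem_iff.mp (hφ (FreeMonoid.ofList u)))
    have hv := (Unitary.mem_iff.mp (hφ (FreeMonoid.ofList v)))
    have h1 : (φ (FreeMonoid.ofList u))ᴴ * φ (FreeMonoid.ofList u) = 1 := hu.1
    have h2 : φ (FreeMonoid.ofList v) * (φ (FreeMonoid.ofList v))ᴴ = 1 := hv.2
    simp only [Matrix.star_eq_conjTranspose, Matrix.fromBlocks_conjTranspose,
      Matrix.conjTranspose_zero, Matrix.fromBlocks_multiply]
    rw [← Matrix.fromBlocks_one]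
    congr 1 <;>
      simp_all [Matrix.conjTranspose_eq_transpose_of_trivial]
  -- compactness of closure M
  have hKcomp : IsCompact
      (Set.univ.pi fun _ : Fin n ⊕ Fin n =>
        Set.univ.pi fun _ : Fin n ⊕ Fin n => Set.Icc (-1 : ℝ) 1 :
          Set (Matrix (Fin n ⊕ Fin n) (Fin n ⊕ Fin n) ℝ)) :=
    isCompact_univ_pi fun _ => isCompact_univ_pi fun _ => isCompact_Icc
  have hMK : M ⊆ (Set.univ.pi fun _ : Fin n ⊕ Fin n =>
        Set.univ.pi fun _ : Fin n ⊕ Fin n => Set.Icc (-1 : ℝ) 1) := by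
    intro Z hZ
    intro i _
    intro j _
    exact entry_mem_Icc_of_star_mul_self Z (hMorth Z hZ) i j
  have hclM : IsCompact (closure M) :=
    hKcomp.of_isClosed_subset isClosed_closure (closure_minimal hMK hKcomp.isClosed)
  -- closure M consists of block-diagonal matrices
  have hblocks : ∀ Z ∈ closure M, Z.toBlocks₁₂ = 0 ∧ Z.toBlocks₂₁ = 0 := by
    have hclosed : IsClosed {Z : Matrix (Fin n ⊕ Fin n) (Fin n ⊕ Fin n) ℝ |
        Z.toBlocks₁₂ = 0 ∧ Z.toBlocks₂₁ = 0} := by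
      have h1 : Continuous fun Z : Matrix (Fin n ⊕ Fin n) (Fin n ⊕ Fin n) ℝ =>
          Z.toBlocks₁₂ := continuous_id.matrix_submatrix Sum.inl Sum.inr
      have h2 : Continuous fun Z : Matrix (Fin n ⊕ Fin n) (Fin n ⊕ Fin n) ℝ =>
          Z.toBlocks₂₁ := continuous_id.matrix_submatrix Sum.inr Sum.inl
      exact (isClosed_singleton.preimage h1).inter (isClosed_singleton.preimage h2)
    intro Z hZ
    refine closure_minimal ?_ hclosed hZ
    rintro W ⟨u, v, _, rfl⟩
    constructor <;> simp [Matrix.toBlocks_fromBlocks₁₂, Matrix.toBlocks_fromBlocks₂₁]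
  -- the RHS set equals F '' closure M
  have hRHS : {Z : Matrix (Fin n) (Fin n) ℝ | ∃ X Y : Matrix (Fin n) (Fin n) ℝ,
        Matrix.fromBlocks X 0 0 Y ∈ closure M ∧
        Z = X * φ (FreeMonoid.ofList w) * Yᵀ} = F '' closure M := by
    ext Z
    constructor
    · rintro ⟨X, Y, hmem, rfl⟩
      exact ⟨Matrix.fromBlocks X 0 0 Y, hmem, by
        simp [hF, Matrix.toBlocks_fromBlocks₁₁, Matrix.toBlocks_fromBlocks₂₂]⟩
    · rintro ⟨Z', hZ', rfl⟩
      obtain ⟨h12, h21⟩ := hblocks Z' hZ'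
      refine ⟨Z'.toBlocks₁₁, Z'.toBlocks₂₂, ?_, rfl⟩
      have : Matrix.fromBlocks Z'.toBlocks₁₁ (0 : Matrix (Fin n) (Fin n) ℝ) 0
          Z'.toBlocks₂₂ = Z' := by
        conv_rhs => rw [← Matrix.fromBlocks_toBlocks Z']
        rw [h12, h21]
      rw [this]; exact hZ'
  -- the image of L equals F '' M
  have hL : ((fun x : List T => φ (FreeMonoid.ofList x)) ''
        {x : List T | ∃ u v : List T,
          g.Derives [Symbol.nonterminal g.initial]
            (u.map Symbol.terminal ++ [Symbol.nonterminal g.initial] ++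
              v.map Symbol.terminal) ∧
          x = u ++ w ++ v}) = F '' M := by
    ext Z
    constructor
    · rintro ⟨x, ⟨u, v, hd, rfl⟩, rfl⟩
      refine ⟨Matrix.fromBlocks (φ (FreeMonoid.ofList u)) 0 0
        ((φ (FreeMonoid.ofList v))ᵀ), ⟨u, v, hd, rfl⟩, ?_⟩
      simp [hF, Matrix.toBlocks_fromBlocks₁₁, Matrix.toBlocks_fromBlocks₂₂,
        FreeMonoid.ofList_append, _root_.map_mul, Matrix.transpose_transpose, mul_assoc]
    · rintro ⟨Z', ⟨u, v, hd, rfl⟩, rfl⟩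
      refine ⟨u ++ w ++ v, ⟨u, v, hd, rfl⟩, ?_⟩
      simp [hF, Matrix.toBlocks_fromBlocks₁₁, Matrix.toBlocks_fromBlocks₂₂,
        FreeMonoid.ofList_append, _root_.map_mul, Matrix.transpose_transpose, mul_assoc]
  rw [hL, hRHS]
  apply le_antisymm
  · exact closure_minimal (Set.image_mono (f := F) subset_closure)
      ((hclM.image hFcont).isClosed)
  · exact image_closure_subset_closure_image hFcont
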